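/- Let C = (S, P, μ) be a Markov chain with finite state space S. For any state s ∈ S and any integer L ≥ |S|, Σ_{h=0}^{2L} p_h(s, C) ≤ 4 · |S|^{4|S|} · Σ_{h=0}^{L−1} p_h(s, C). -/
import Mathlib


open Finset

/-- `pReach μ P L s` is the probability `p_L(s, C)` of reaching `s` with exactly `L` steps in the
Markov chain `C = (S, P, μ)`: the sum over all `(s_0, …, s_{L-1}) ∈ S^L` of the probability of the
sequence `(s_0, …, s_{L-1}, s)`. -/
noncomputable def pReach {S : Type} [Fintype S] (μ : S → ℝ) (P : S → S → ℝ)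
    (L : ℕ) (s : S) : ℝ :=
  ∑ T : Fin L → S,
    (fun f : ℕ → S => μ (f 0) * ∏ h ∈ Finset.range L, P (f h) (f (h + 1)))
      (fun n => if h : n < L then T ⟨n, h⟩ else s)

set_option linter.unusedSectionVars false

namespace MCaux

variable {S : Type} [Fintype S] [DecidableEq S]

noncomputable def ev (Q : S → S → ℝ) (ν : S → ℝ) : S → ℝ := fun t => ∑ u, ν u * Q u t

noncomputable def pv (Q : S → S → ℝ) (ν : S → ℝ) (h : ℕ) : S → ℝ := (ev Q)^[h] ν

noncomputable def Zz (Q : S → S → ℝ) (ν : S → ℝ) (s : S) (N : ℕ) : ℝ :=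
  ∑ h ∈ range N, pv Q ν h s

noncomputable def dirac (s : S) : S → ℝ := fun t => if t = s then 1 else 0

noncomputable def Gg (Q : S → S → ℝ) (s : S) (N : ℕ) : ℝ :=
  ∑ m ∈ range N, pv Q (dirac s) m s

noncomputable def del (s : S) (ν : S → ℝ) : S → ℝ := fun t => if t = s then 0 else ν t

noncomputable def taboo (Q : S → S → ℝ) (s : S) : S → S → ℝ :=
  fun t u => if u = s then 0 else Q t u

noncomputable def ff (Q : S → S → ℝ) (ν : S → ℝ) (s : S) : ℕ → ℝ
  | 0 => ν s
  | (i+1) => ev Q (pv (taboo Q s) (del s ν) i) s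

noncomputable def Ff (Q : S → S → ℝ) (ν : S → ℝ) (s : S) (N : ℕ) : ℝ :=
  ∑ i ∈ range N, ff Q ν s i

variable {Q : S → S → ℝ} {ν : S → ℝ} {s : S}

lemma pv_zero : pv Q ν 0 = ν := rfl

lemma pv_succ (h : ℕ) : pv Q ν (h+1) = pv Q (ev Q ν) h := Function.iterate_succ_apply (ev Q) h ν

lemma pv_succ' (h : ℕ) : pv Q ν (h+1) = ev Q (pv Q ν h) := Function.iterate_succ_apply' (ev Q) h ν

lemma pv_add_eq (x T : ℕ) : pv Q ν (x + T) = pv Q (pv Q ν x) T := by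
  simpa [pv, Nat.add_comm x T] using Function.iterate_add_apply (ev Q) T x ν

lemma ev_nonneg (hQ0 : ∀ t u, 0 ≤ Q t u) (hν : ∀ t, 0 ≤ ν t) : ∀ t, 0 ≤ ev Q ν t := by
  intro t
  exact Finset.sum_nonneg fun u _ => mul_nonneg (hν u) (hQ0 u t)

lemma pv_nonneg (hQ0 : ∀ t u, 0 ≤ Q t u) (hν : ∀ t, 0 ≤ ν t) (h : ℕ) :
    ∀ t, 0 ≤ pv Q ν h t := by
  induction h generalizing ν with
  | zero => exact hν
  | succ n ih => rw [pv_succ]; exact ih (ev_nonneg hQ0 hν)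

lemma ev_add (w : S → ℝ) : ev Q (fun t => ν t + w t) = fun t => ev Q ν t + ev Q w t := by
  funext t
  simp [ev, add_mul, Finset.sum_add_distrib]

lemma ev_smul (c : ℝ) : ev Q (fun t => c * ν t) = fun t => c * ev Q ν t := by
  funext t
  simp [ev, Finset.mul_sum, mul_assoc]

lemma pv_add (w : S → ℝ) (h : ℕ) :
    pv Q (fun t => ν t + w t) h = fun t => pv Q ν h t + pv Q w h t := by
  induction h generalizing ν w with
  | zero => rfl
  | succ n ih => rw [pv_succ, ev_add, ih, pv_succ, pv_succ]

lemma pv_smul (c : ℝ) (h : ℕ) :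
    pv Q (fun t => c * ν t) h = fun t => c * pv Q ν h t := by
  induction h generalizing ν with
  | zero => rfl
  | succ n ih => rw [pv_succ, ev_smul, ih, pv_succ]

/- nonnegativity of derived objects -/

lemma del_nonneg (hν : ∀ t, 0 ≤ ν t) : ∀ t, 0 ≤ del s ν t := by
  intro t; unfold del; split <;> [exact le_refl 0; exact hν t]

lemma dirac_nonneg : ∀ t, 0 ≤ dirac s t := by
  intro t; unfold dirac; split <;> norm_num

lemma taboo_nonneg (hQ0 : ∀ t u, 0 ≤ Q t u) : ∀ t u, 0 ≤ taboo Q s t u := by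
  intro t u; unfold taboo; split <;> [exact le_refl 0; exact hQ0 t u]

lemma taboo_rowsum (hQ0 : ∀ t u, 0 ≤ Q t u) (hQ1 : ∀ t, ∑ u, Q t u ≤ 1) :
    ∀ t, ∑ u, taboo Q s t u ≤ 1 := by
  intro t
  refine le_trans (Finset.sum_le_sum fun u _ => ?_) (hQ1 t)
  unfold taboo; split <;> [exact hQ0 t u; exact le_refl _]

lemma ff_nonneg (hQ0 : ∀ t u, 0 ≤ Q t u) (hν : ∀ t, 0 ≤ ν t) (i : ℕ) : 0 ≤ ff Q ν s i := by
  cases i with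
  | zero => exact hν s
  | succ n =>
    exact ev_nonneg hQ0 (pv_nonneg (taboo_nonneg hQ0) (del_nonneg hν) n) s

lemma Ff_nonneg (hQ0 : ∀ t u, 0 ≤ Q t u) (hν : ∀ t, 0 ≤ ν t) (N : ℕ) : 0 ≤ Ff Q ν s N :=
  Finset.sum_nonneg fun i _ => ff_nonneg hQ0 hν i

lemma Ff_mono (hQ0 : ∀ t u, 0 ≤ Q t u) (hν : ∀ t, 0 ≤ ν t) {a b : ℕ} (hab : a ≤ b) :
    Ff Q ν s a ≤ Ff Q ν s b :=
  Finset.sum_le_sum_of_subset_of_nonneg (Finset.range_subset_range.2 hab)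
    (fun i _ _ => ff_nonneg hQ0 hν i)

lemma Zz_nonneg (hQ0 : ∀ t u, 0 ≤ Q t u) (hν : ∀ t, 0 ≤ ν t) (N : ℕ) : 0 ≤ Zz Q ν s N :=
  Finset.sum_nonneg fun h _ => pv_nonneg hQ0 hν h s

lemma Zz_mono (hQ0 : ∀ t u, 0 ≤ Q t u) (hν : ∀ t, 0 ≤ ν t) {a b : ℕ} (hab : a ≤ b) :
    Zz Q ν s a ≤ Zz Q ν s b :=
  Finset.sum_le_sum_of_subset_of_nonneg (Finset.range_subset_range.2 hab)
    (fun h _ _ => pv_nonneg hQ0 hν h s)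

lemma Gg_nonneg (hQ0 : ∀ t u, 0 ≤ Q t u) (N : ℕ) : 0 ≤ Gg Q s N :=
  Finset.sum_nonneg fun h _ => pv_nonneg hQ0 dirac_nonneg h s

lemma Gg_mono (hQ0 : ∀ t u, 0 ≤ Q t u) {a b : ℕ} (hab : a ≤ b) : Gg Q s a ≤ Gg Q s b :=
  Finset.sum_le_sum_of_subset_of_nonneg (Finset.range_subset_range.2 hab)
    (fun h _ _ => pv_nonneg hQ0 dirac_nonneg h s)

lemma Zz_dirac (N : ℕ) : Zz Q (dirac s) s N = Gg Q s N := rfl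

/- mass lemmas -/

lemma sum_ev_le (hQ0 : ∀ t u, 0 ≤ Q t u) (hQ1 : ∀ t, ∑ u, Q t u ≤ 1)
    (hν : ∀ t, 0 ≤ ν t) : ∑ t, ev Q ν t ≤ ∑ t, ν t := by
  rw [show ∑ t, ev Q ν t = ∑ u, ν u * ∑ t, Q u t by
    unfold ev
    rw [Finset.sum_comm]
    exact Finset.sum_congr rfl fun u _ => by rw [Finset.mul_sum]]
  calc ∑ u, ν u * ∑ t, Q u t ≤ ∑ u, ν u * 1 :=
        Finset.sum_le_sum fun u _ => mul_le_mul_of_nonneg_left (hQ1 u) (hν u)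
    _ = ∑ u, ν u := by simp

lemma sum_pv_le (hQ0 : ∀ t u, 0 ≤ Q t u) (hQ1 : ∀ t, ∑ u, Q t u ≤ 1)
    (hν : ∀ t, 0 ≤ ν t) (h : ℕ) : ∑ t, pv Q ν h t ≤ ∑ t, ν t := by
  induction h generalizing ν with
  | zero => exact le_refl _
  | succ n ih =>
    rw [pv_succ]
    exact le_trans (ih (ev_nonneg hQ0 hν)) (sum_ev_le hQ0 hQ1 hν)

lemma sum_dirac : ∑ t, dirac s t = 1 := by simp [dirac]

lemma del_add_dirac : ∀ t, del s ν t + ν s * dirac s t = ν t := by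
  intro t
  unfold del dirac
  by_cases h : t = s <;> simp [h]

lemma sum_del : ∑ t, del s ν t = (∑ t, ν t) - ν s := by
  have : ∑ t, (del s ν t + ν s * dirac s t) = ∑ t, ν t :=
    Finset.sum_congr rfl fun t _ => del_add_dirac t
  rw [Finset.sum_add_distrib, ← Finset.mul_sum, sum_dirac] at this
  linarith

end MCaux
namespace MCaux
variable {S : Type} [Fintype S] [DecidableEq S]
variable {Q : S → S → ℝ} {ν : S → ℝ} {s : S}

lemma del_ev : del s (ev Q ν) = ev (taboo Q s) ν := by
  funext t
  unfold del ev taboo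
  by_cases h : t = s <;> simp [h]

lemma ev_taboo_s : ev (taboo Q s) ν s = 0 := by
  unfold ev taboo; simp

/-- helper: for ν vanishing at s -/
lemma decomp_aux (hs : ν s = 0) (h : ℕ) :
    pv Q ν h s = ∑ i ∈ range h,
      (ev Q (pv (taboo Q s) ν i) s) * pv Q (dirac s) (h - 1 - i) s := by
  induction h generalizing ν with
  | zero => simpa [pv] using hs
  | succ n ih =>
    have hsplit : ev Q ν = fun t => ev (taboo Q s) ν t + (ev Q ν s) * dirac s t := by
      funext t
      have h1 : del s (ev Q ν) t + (ev Q ν) s * dirac s t = ev Q ν t := del_add_dirac t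
      rw [del_ev] at h1
      linarith
    have h2 : pv Q ν (n+1) s = pv Q (ev (taboo Q s) ν) n s + (ev Q ν s) * pv Q (dirac s) n s := by
      rw [pv_succ]
      conv_lhs => rw [hsplit]
      rw [pv_add (ν := ev (taboo Q s) ν) (w := fun t => ev Q ν s * dirac s t),
        pv_smul (ν := dirac s) (c := ev Q ν s)]
    rw [h2, ih (ν := ev (taboo Q s) ν) ev_taboo_s]
    rw [Finset.sum_range_succ']
    congr 1
    refine Finset.sum_congr rfl fun i hi => ?_
    have : pv (taboo Q s) (ev (taboo Q s) ν) i = pv (taboo Q s) ν (i+1) := (pv_succ i).symm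
    rw [this]
    congr 2
    omega

lemma decomp (h : ℕ) :
    pv Q ν h s = ∑ i ∈ range (h+1), ff Q ν s i * pv Q (dirac s) (h - i) s := by
  have hsplit : ν = fun t => del s ν t + ν s * dirac s t := by
    funext t; exact (del_add_dirac t).symm
  have h2 : pv Q ν h s = pv Q (del s ν) h s + ν s * pv Q (dirac s) h s := by
    conv_lhs => rw [hsplit]
    rw [pv_add, pv_smul]
  rw [h2, decomp_aux (ν := del s ν) (by simp [del]) h, Finset.sum_range_succ']
  congr 1
  refine Finset.sum_congr rfl fun i hi => ?_
  have : ff Q ν s (i+1) = ev Q (pv (taboo Q s) (del s ν) i) s := rfl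
  rw [this]
  congr 2
  omega

lemma Zz_eq (N : ℕ) : Zz Q ν s N = ∑ i ∈ range N, ff Q ν s i * Gg Q s (N - i) := by
  induction N with
  | zero => simp [Zz]
  | succ n ih =>
    have h1 : Zz Q ν s (n+1) = Zz Q ν s n + pv Q ν n s := Finset.sum_range_succ _ n
    rw [h1, ih, decomp n, Finset.sum_range_succ, Finset.sum_range_succ]
    have h2 : ∀ i ∈ range n, ff Q ν s i * Gg Q s (n + 1 - i)
        = ff Q ν s i * Gg Q s (n - i) + ff Q ν s i * pv Q (dirac s) (n - i) s := by
      intro i hi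
      have hi' : i < n := Finset.mem_range.1 hi
      have : n + 1 - i = (n - i) + 1 := by omega
      rw [this, show Gg Q s ((n-i)+1) = Gg Q s (n-i) + pv Q (dirac s) (n-i) s from
        Finset.sum_range_succ _ _]
      ring
    rw [Finset.sum_congr rfl h2, Finset.sum_add_distrib]
    have : Gg Q s (n + 1 - n) = pv Q (dirac s) 0 s := by
      norm_num [Gg]
    rw [this]
    have : (n : ℕ) - n = 0 := by omega
    rw [this]
    ring

end MCaux
namespace MCaux
variable {S : Type} [Fintype S] [DecidableEq S]
variable {Q : S → S → ℝ} {ν : S → ℝ} {s : S}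

/-- key step inequality for mass telescoping -/
lemma ev_mass_step (hQ0 : ∀ t u, 0 ≤ Q t u) (hQ1 : ∀ t, ∑ u, Q t u ≤ 1)
    {v : S → ℝ} (hv : ∀ t, 0 ≤ v t) :
    ev Q v s + ∑ t, ev (taboo Q s) v t ≤ ∑ t, v t := by
  have h1 : ∑ t, ev (taboo Q s) v t = ∑ u, v u * ∑ t, taboo Q s u t := by
    unfold ev
    rw [Finset.sum_comm]
    exact Finset.sum_congr rfl fun u _ => by rw [Finset.mul_sum]
  have h2 : ∀ u, ∑ t, taboo Q s u t = (∑ t, Q u t) - Q u s := by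
    intro u
    have hpt : ∀ t, Q u t = taboo Q s u t + (if t = s then Q u s else 0) := by
      intro t; unfold taboo; by_cases h : t = s <;> simp [h]
    rw [Finset.sum_congr rfl fun t _ => hpt t, Finset.sum_add_distrib]
    simp
  have h3 : ev Q v s + ∑ t, ev (taboo Q s) v t = ∑ u, v u * ∑ t, Q u t := by
    rw [h1]
    unfold ev
    rw [← Finset.sum_add_distrib]
    refine Finset.sum_congr rfl fun u _ => ?_
    rw [h2 u]; ring
  rw [h3]
  calc ∑ u, v u * ∑ t, Q u t ≤ ∑ u, v u * 1 :=
        Finset.sum_le_sum fun u _ => mul_le_mul_of_nonneg_left (hQ1 u) (hv u)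
    _ = ∑ u, v u := by simp

lemma Ff_le_mass (hQ0 : ∀ t u, 0 ≤ Q t u) (hQ1 : ∀ t, ∑ u, Q t u ≤ 1)
    (hν : ∀ t, 0 ≤ ν t) (N : ℕ) : Ff Q ν s N ≤ ∑ t, ν t := by
  cases N with
  | zero =>
    simpa [Ff] using Finset.sum_nonneg fun t _ => hν t
  | succ n =>
    have hFf : Ff Q ν s (n+1) = ν s + ∑ i ∈ range n, ff Q ν s (i+1) := by
      rw [Ff, Finset.sum_range_succ']
      have : ff Q ν s 0 = ν s := rfl
      rw [this]; ring
    set m : ℕ → ℝ := fun i => ∑ t, pv (taboo Q s) (del s ν) i t with hm_def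
    have hstep : ∀ i, ff Q ν s (i+1) ≤ m i - m (i+1) := by
      intro i
      have hkey := ev_mass_step (s := s) hQ0 hQ1
        (v := pv (taboo Q s) (del s ν) i)
        (pv_nonneg (taboo_nonneg hQ0) (del_nonneg hν) i)
      have hm : m (i+1) = ∑ t, ev (taboo Q s) (pv (taboo Q s) (del s ν) i) t := by
        simp only [hm_def, pv_succ']
      have hf : ff Q ν s (i+1) = ev Q (pv (taboo Q s) (del s ν) i) s := rfl
      rw [hf, hm]; linarith
    have htel : ∑ i ∈ range n, ff Q ν s (i+1) ≤ m 0 - m n := by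
      calc ∑ i ∈ range n, ff Q ν s (i+1) ≤ ∑ i ∈ range n, (m i - m (i+1)) :=
            Finset.sum_le_sum fun i _ => hstep i
        _ = m 0 - m n := Finset.sum_range_sub' m n
    have hm0 : m 0 = (∑ t, ν t) - ν s := by
      simp only [hm_def, pv_zero]; exact sum_del
    have hmn : 0 ≤ m n :=
      Finset.sum_nonneg fun t _ => pv_nonneg (taboo_nonneg hQ0) (del_nonneg hν) n t
    rw [hFf]; linarith

lemma Zz_le_Ff_Gg (hQ0 : ∀ t u, 0 ≤ Q t u) (hν : ∀ t, 0 ≤ ν t) (N : ℕ) :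
    Zz Q ν s N ≤ Ff Q ν s N * Gg Q s N := by
  rw [Zz_eq, Ff, Finset.sum_mul]
  refine Finset.sum_le_sum fun i hi => ?_
  exact mul_le_mul_of_nonneg_left (Gg_mono hQ0 (Nat.sub_le N i)) (ff_nonneg hQ0 hν i)

lemma Zz_add (x T : ℕ) : Zz Q ν s (x + T) = Zz Q ν s x + Zz Q (pv Q ν x) s T := by
  induction T with
  | zero => simp [Zz]
  | succ n ih =>
    have h1 : x + (n+1) = (x + n) + 1 := by omega
    rw [h1, show Zz Q ν s ((x+n)+1) = Zz Q ν s (x+n) + pv Q ν (x+n) s from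
        Finset.sum_range_succ _ _, ih,
      show Zz Q (pv Q ν x) s (n+1) = Zz Q (pv Q ν x) s n + pv Q (pv Q ν x) n s from
        Finset.sum_range_succ _ _, pv_add_eq]
    ring

lemma Gg_add_le (hQ0 : ∀ t u, 0 ≤ Q t u) (hQ1 : ∀ t, ∑ u, Q t u ≤ 1) (x T : ℕ) :
    Gg Q s (x + T) ≤ Gg Q s x + Gg Q s T := by
  have h1 : Gg Q s (x+T) = Gg Q s x + Zz Q (pv Q (dirac s) x) s T := by
    rw [← Zz_dirac, Zz_add, Zz_dirac]
  rw [h1]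
  have hw : ∀ t, 0 ≤ pv Q (dirac s) x t := pv_nonneg hQ0 dirac_nonneg x
  have h2 : Zz Q (pv Q (dirac s) x) s T ≤ Ff Q (pv Q (dirac s) x) s T * Gg Q s T :=
    Zz_le_Ff_Gg hQ0 hw T
  have h3 : Ff Q (pv Q (dirac s) x) s T ≤ ∑ t, pv Q (dirac s) x t := Ff_le_mass hQ0 hQ1 hw T
  have h4 : ∑ t, pv Q (dirac s) x t ≤ 1 := by
    have h5 := sum_pv_le (ν := dirac s) hQ0 hQ1 dirac_nonneg x
    rw [sum_dirac] at h5; exact h5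
  have h5 : 0 ≤ Gg Q s T := Gg_nonneg hQ0 T
  have h6 : 0 ≤ Ff Q (pv Q (dirac s) x) s T := Ff_nonneg hQ0 hw T
  nlinarith

lemma Gg_sub_le (hQ0 : ∀ t u, 0 ≤ Q t u) (hQ1 : ∀ t, ∑ u, Q t u ≤ 1) {x y : ℕ} (hxy : x ≤ y) :
    Gg Q s y - Gg Q s x ≤ Gg Q s (y - x) := by
  have h1 : x + (y - x) = y := by omega
  have := Gg_add_le (s := s) hQ0 hQ1 x (y - x)
  rw [h1] at this
  linarith

lemma Gg_pow_le (hQ0 : ∀ t u, 0 ≤ Q t u) (hQ1 : ∀ t, ∑ u, Q t u ≤ 1) (d K : ℕ) :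
    Gg Q s (2^d * K) ≤ 2^d * Gg Q s K := by
  induction d with
  | zero => simp
  | succ n ih =>
    have h1 : 2^(n+1) * K = 2^n * K + 2^n * K := by ring
    calc Gg Q s (2^(n+1) * K) ≤ Gg Q s (2^n * K) + Gg Q s (2^n * K) := by
          rw [h1]; exact Gg_add_le hQ0 hQ1 _ _
      _ ≤ 2^n * Gg Q s K + 2^n * Gg Q s K := add_le_add ih ih
      _ = 2^(n+1) * Gg Q s K := by ring

lemma Zz_sub_le (hQ0 : ∀ t u, 0 ≤ Q t u) (hQ1 : ∀ t, ∑ u, Q t u ≤ 1)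
    (hν : ∀ t, 0 ≤ ν t) {x y : ℕ} (hxy : x ≤ y) :
    Zz Q ν s y - Zz Q ν s x ≤ Ff Q ν s y * Gg Q s (y - x) := by
  rw [Zz_eq (N := y), Zz_eq (N := x)]
  have hGg0 : Gg Q s 0 = 0 := by simp [Gg]
  have hext : ∑ i ∈ range x, ff Q ν s i * Gg Q s (x - i)
      = ∑ i ∈ range y, ff Q ν s i * Gg Q s (x - i) := by
    refine Finset.sum_subset (Finset.range_subset_range.2 hxy) fun i _ hi => ?_
    have : x - i = 0 := by
      simp only [Finset.mem_range, not_lt] at hi; omega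
    rw [this, hGg0, mul_zero]
  rw [hext, ← Finset.sum_sub_distrib, Ff, Finset.sum_mul]
  refine Finset.sum_le_sum fun i hi => ?_
  have hr : ff Q ν s i * Gg Q s (y-i) - ff Q ν s i * Gg Q s (x-i)
      = ff Q ν s i * (Gg Q s (y-i) - Gg Q s (x-i)) := by ring
  rw [hr]
  refine mul_le_mul_of_nonneg_left ?_ (ff_nonneg hQ0 hν i)
  by_cases hix : i ≤ x
  · have h1 : (y - i) - (x - i) = y - x := by omega
    have h2 := Gg_sub_le (s := s) hQ0 hQ1 (Nat.sub_le_sub_right hxy i)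
    rw [h1] at h2; exact h2
  · have h1 : x - i = 0 := by omega
    rw [h1, hGg0, sub_zero]
    exact Gg_mono hQ0 (by omega)

lemma Ff_Gg_le_Zz (hQ0 : ∀ t u, 0 ≤ Q t u) (hν : ∀ t, 0 ≤ ν t) {A B N : ℕ}
    (hABN : A + B ≤ N + 1) :
    Ff Q ν s A * Gg Q s B ≤ Zz Q ν s N := by
  rcases Nat.eq_zero_or_pos B with hB | hB
  · rw [hB, show Gg Q s 0 = 0 by simp [Gg], mul_zero]
    exact Zz_nonneg hQ0 hν N
  have hA : A ≤ N := by omega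
  rw [Zz_eq, Ff, Finset.sum_mul]
  refine le_trans (Finset.sum_le_sum fun i hi => ?_)
    (Finset.sum_le_sum_of_subset_of_nonneg (Finset.range_subset_range.2 hA)
      fun i _ _ => mul_nonneg (ff_nonneg hQ0 hν i) (Gg_nonneg hQ0 _))
  have hiA : i < A := Finset.mem_range.1 hi
  exact mul_le_mul_of_nonneg_left (Gg_mono hQ0 (by omega)) (ff_nonneg hQ0 hν i)

end MCaux
namespace MCaux
variable {S : Type} [Fintype S] [DecidableEq S]
variable {Q : S → S → ℝ} {ν : S → ℝ} {s : S}

lemma restrict_pv (Q : S → S → ℝ) (s : S) (i : ℕ) (v : S → ℝ) (hv : v s = 0) :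
    pv (taboo Q s) v i s = 0 ∧
    ∀ (a : {t : S // t ≠ s}), pv (taboo Q s) v i a.1
      = pv (fun a b : {t : S // t ≠ s} => Q a.1 b.1) (fun b => v b.1) i a := by
  induction i generalizing v with
  | zero => exact ⟨hv, fun a => rfl⟩
  | succ n ih =>
    have hv' : ev (taboo Q s) v s = 0 := ev_taboo_s
    have hrest : (fun b : {t : S // t ≠ s} => ev (taboo Q s) v b.1)
        = ev (fun a b : {t : S // t ≠ s} => Q a.1 b.1) (fun b => v b.1) := by
      funext a
      show ev (taboo Q s) v a.1 = _
      unfold ev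
      have h1 : ∀ u : S, v u * taboo Q s u a.1 = v u * Q u a.1 := by
        intro u; unfold taboo; rw [if_neg a.2]
      rw [Finset.sum_congr rfl fun u _ => h1 u,
        Fintype.sum_eq_add_sum_compl s (fun u => v u * Q u a.1), hv, zero_mul, zero_add]
      exact Finset.sum_subtype (p := fun t => t ≠ s) _ (fun x => by simp) (fun u => v u * Q u a.1)
    constructor
    · rw [pv_succ]
      exact (ih (ev (taboo Q s) v) hv').1
    · intro a
      rw [pv_succ, (ih (ev (taboo Q s) v) hv').2 a, pv_succ, hrest]

lemma Ff_expand (N : ℕ) :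
    Ff Q ν s (N+1) = ν s + ∑ a : {t : S // t ≠ s},
      Q a.1 s * Zz (fun a b : {t : S // t ≠ s} => Q a.1 b.1) (fun b => ν b.1) a N := by
  rw [Ff, Finset.sum_range_succ']
  have h0 : ff Q ν s 0 = ν s := rfl
  have hdel : del s ν s = 0 := by simp [del]
  have hdelr : (fun b : {t : S // t ≠ s} => del s ν b.1) = (fun b : {t : S // t ≠ s} => ν b.1) := by
    funext b; unfold del; rw [if_neg b.2]
  have h1 : ∀ i, ff Q ν s (i+1) = ∑ a : {t : S // t ≠ s},
      pv (fun a b : {t : S // t ≠ s} => Q a.1 b.1) (fun b => ν b.1) i a * Q a.1 s := by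
    intro i
    have hr := restrict_pv Q s i (del s ν) hdel
    show ev Q (pv (taboo Q s) (del s ν) i) s = _
    unfold ev
    rw [Fintype.sum_eq_add_sum_compl s (fun u => pv (taboo Q s) (del s ν) i u * Q u s),
      hr.1, zero_mul, zero_add,
      Finset.sum_subtype (p := fun t => t ≠ s) _ (fun x => by simp) (fun u => pv (taboo Q s) (del s ν) i u * Q u s)]
    refine Finset.sum_congr rfl fun a _ => ?_
    rw [hr.2 a, hdelr]
  rw [h0, Finset.sum_congr rfl fun i _ => h1 i]
  rw [Finset.sum_comm]
  have h2 : ∀ a : {t : S // t ≠ s}, ∑ i ∈ range N,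
      pv (fun a b : {t : S // t ≠ s} => Q a.1 b.1) (fun b => ν b.1) i a * Q a.1 s
      = Q a.1 s * Zz (fun a b : {t : S // t ≠ s} => Q a.1 b.1) (fun b => ν b.1) a N := by
    intro a
    rw [Zz, Finset.mul_sum]
    exact Finset.sum_congr rfl fun i _ => by ring
  rw [Finset.sum_congr rfl fun a _ => h2 a]
  ring

end MCaux
namespace MCaux

theorem key (n : ℕ) : ∀ (S : Type) [Fintype S] [DecidableEq S]
    (Q : S → S → ℝ) (ν : S → ℝ) (s : S),
    Fintype.card S = n → (∀ t u, 0 ≤ Q t u) → (∀ t, ∑ u, Q t u ≤ 1) → (∀ t, 0 ≤ ν t) →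
    ∀ (K d : ℕ), 1 ≤ K → 1 ≤ d →
    Zz Q ν s (2^d * K) ≤ (2 * 2^(d*n) - 1 : ℝ) * Zz Q ν s (n * K) := by
  induction n with
  | zero =>
    intro S _ _ Q ν s hcard
    exact absurd hcard (by
      have : 0 < Fintype.card S := Fintype.card_pos_iff.2 ⟨s⟩
      omega)
  | succ n ih =>
    intro S _ _ Q ν s hcard hQ0 hQ1 hν K d hK hd
    -- the subchain on states ≠ s
    set S' := {t : S // t ≠ s} with hS'
    set Q' : S' → S' → ℝ := fun a b => Q a.1 b.1 with hQ'
    set ν2 : S' → ℝ := fun b => ν b.1 with hν2def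
    have hcard' : Fintype.card S' = n := by
      have h1 : Fintype.card S' = Fintype.card S - Fintype.card {t : S // t = s} :=
        Fintype.card_subtype_compl _
    -- card {t // t = s} = 1
      rw [Fintype.card_subtype_eq s] at h1
      omega
    have hQ0' : ∀ a b : S', 0 ≤ Q' a b := fun a b => hQ0 a.1 b.1
    have hQ1' : ∀ a : S', ∑ b, Q' a b ≤ 1 := by
      intro a
      have h2 : ∑ b : S', Q' a b = ∑ u ∈ ({s}ᶜ : Finset S), Q a.1 u :=
        (Finset.sum_subtype (p := fun t => t ≠ s) _ (fun x => by simp) (fun u => Q a.1 u)).symm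
      rw [h2]
      refine le_trans ?_ (hQ1 a.1)
      rw [Fintype.sum_eq_add_sum_compl s (fun u => Q a.1 u)]
      have := hQ0 a.1 s
      linarith
    have hν2 : ∀ b : S', 0 ≤ ν2 b := fun b => hν b.1
    set Cb : ℝ := 2 * 2^(d*n) - 1 with hCb
    have hpow1 : (1:ℝ) ≤ 2^(d*n) := one_le_pow₀ (by norm_num)
    have hCb1 : (1:ℝ) ≤ Cb := by rw [hCb]; nlinarith
    have hd2 : (2:ℝ) ≤ 2^d := by
      calc (2:ℝ) = 2^1 := (pow_one 2).symm
        _ ≤ 2^d := pow_le_pow_right₀ (by norm_num) hd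
    -- nonnegativity facts
    have hGK : 0 ≤ Gg Q s K := Gg_nonneg hQ0 K
    have hFtop : 0 ≤ Ff Q ν s (2^d * K) := Ff_nonneg hQ0 hν _
    -- step 1 : telescoping
    have htel : Zz Q ν s (2^d*K) - Zz Q ν s K
        = ∑ i ∈ range d, (Zz Q ν s (2^(i+1)*K) - Zz Q ν s (2^i*K)) := by
      rw [Finset.sum_range_sub (fun i => Zz Q ν s (2^i*K)) d]
      norm_num
    have hterm : ∀ i ∈ range d, Zz Q ν s (2^(i+1)*K) - Zz Q ν s (2^i*K)
        ≤ (Ff Q ν s (2^d*K) * Gg Q s K) * 2^i := by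
      intro i hi
      have hid : i < d := Finset.mem_range.1 hi
      have h2e : (2:ℕ)^(i+1) = 2^i + 2^i := by rw [pow_succ]; ring
      have hle : 2^i*K ≤ 2^(i+1)*K :=
        Nat.mul_le_mul_right K (Nat.pow_le_pow_right (by norm_num) (by omega))
      have hsub : 2^(i+1)*K - 2^i*K = 2^i*K := by
        rw [h2e, Nat.add_mul, Nat.add_sub_cancel]
      have h3 := Zz_sub_le (Q := Q) (ν := ν) (s := s) hQ0 hQ1 hν hle
      rw [hsub] at h3
      have h4 : Ff Q ν s (2^(i+1)*K) ≤ Ff Q ν s (2^d*K) :=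
        Ff_mono hQ0 hν (Nat.mul_le_mul_right K (Nat.pow_le_pow_right (by norm_num) (by omega)))
      have h5 : Gg Q s (2^i*K) ≤ 2^i * Gg Q s K := Gg_pow_le hQ0 hQ1 i K
      have h6 : 0 ≤ Gg Q s (2^i*K) := Gg_nonneg hQ0 _
      have h7 : 0 ≤ Ff Q ν s (2^(i+1)*K) := Ff_nonneg hQ0 hν _
      calc Zz Q ν s (2^(i+1)*K) - Zz Q ν s (2^i*K)
          ≤ Ff Q ν s (2^(i+1)*K) * Gg Q s (2^i*K) := h3
        _ ≤ Ff Q ν s (2^d*K) * (2^i * Gg Q s K) := by nlinarith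
        _ = (Ff Q ν s (2^d*K) * Gg Q s K) * 2^i := by ring
    have hgeo : ∑ i ∈ range d, (2:ℝ)^i = 2^d - 1 := by
      rw [geom_sum_eq (by norm_num)]
      norm_num
    have hmain1 : Zz Q ν s (2^d*K) ≤ Zz Q ν s K
        + (2^d - 1) * (Ff Q ν s (2^d*K) * Gg Q s K) := by
      have h8 : Zz Q ν s (2^d*K) - Zz Q ν s K
          ≤ ∑ i ∈ range d, (Ff Q ν s (2^d*K) * Gg Q s K) * 2^i := by
        rw [htel]
        exact Finset.sum_le_sum hterm
      rw [← Finset.mul_sum, hgeo] at h8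
      linarith
    -- step 2 : bound Ff (2^d K) using induction hypothesis
    have hpos : 1 ≤ 2^d * K := Nat.one_le_iff_ne_zero.2 (by positivity)
    have hFexp : Ff Q ν s (2^d*K) = ν s + ∑ a : S', Q a.1 s * Zz Q' ν2 a (2^d*K - 1) := by
      have : 2^d*K = (2^d*K - 1) + 1 := by omega
      rw [this]
      exact Ff_expand _
    have hFexp2 : Ff Q ν s (n*K + 1) = ν s + ∑ a : S', Q a.1 s * Zz Q' ν2 a (n*K) :=
      Ff_expand _
    have hZsub : ∀ a : S', Zz Q' ν2 a (2^d*K - 1) ≤ Cb * Zz Q' ν2 a (n*K) := by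
      intro a
      have h9 : Zz Q' ν2 a (2^d*K - 1) ≤ Zz Q' ν2 a (2^d*K) :=
        Zz_mono hQ0' hν2 (by omega)
      exact le_trans h9 (ih S' Q' ν2 a hcard' hQ0' hQ1' hν2 K d hK hd)
    have hFle : Ff Q ν s (2^d*K) ≤ Cb * Ff Q ν s (n*K + 1) := by
      rw [hFexp, hFexp2]
      have h10 : ∑ a : S', Q a.1 s * Zz Q' ν2 a (2^d*K - 1)
          ≤ Cb * ∑ a : S', Q a.1 s * Zz Q' ν2 a (n*K) := by
        rw [Finset.mul_sum]
        refine Finset.sum_le_sum fun a _ => ?_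
        have := hZsub a
        have h11 := hQ0 a.1 s
        nlinarith
      have h12 := hν s
      nlinarith
    -- step 3 : lower bound
    have hlow : Ff Q ν s (n*K + 1) * Gg Q s K ≤ Zz Q ν s ((n+1) * K) :=
      Ff_Gg_le_Zz hQ0 hν (by ring_nf; omega)
    have hmono : Zz Q ν s K ≤ Zz Q ν s ((n+1)*K) :=
      Zz_mono hQ0 hν (by nlinarith)
    -- combine
    have hFG : 0 ≤ Ff Q ν s (n*K+1) * Gg Q s K :=
      mul_nonneg (Ff_nonneg hQ0 hν _) hGK
    have hZ2 : 0 ≤ Zz Q ν s ((n+1)*K) := Zz_nonneg hQ0 hν _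
    have hcomb : Zz Q ν s (2^d*K) ≤ (1 + (2^d - 1) * Cb) * Zz Q ν s ((n+1)*K) := by
      have h13 : (2:ℝ)^d - 1 ≥ 0 := by linarith
      have h14 : (2^d - 1) * (Ff Q ν s (2^d*K) * Gg Q s K)
          ≤ (2^d - 1) * (Cb * (Ff Q ν s (n*K+1) * Gg Q s K)) := by
        refine mul_le_mul_of_nonneg_left ?_ h13
        have h14a : Ff Q ν s (2^d*K) * Gg Q s K ≤ (Cb * Ff Q ν s (n*K+1)) * Gg Q s K :=
          mul_le_mul_of_nonneg_right hFle hGK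
        linarith [h14a]
      have h15 : (2^d - 1) * (Cb * (Ff Q ν s (n*K+1) * Gg Q s K))
          ≤ (2^d - 1) * (Cb * Zz Q ν s ((n+1)*K)) := by
        refine mul_le_mul_of_nonneg_left (mul_le_mul_of_nonneg_left hlow (by linarith)) h13
      have h16 : (1 + (2^d - 1) * Cb) * Zz Q ν s ((n+1)*K)
          = Zz Q ν s ((n+1)*K) + (2^d - 1) * (Cb * Zz Q ν s ((n+1)*K)) := by ring
      rw [h16]
      linarith
    have hnum : (1 + (2^d - 1) * Cb : ℝ) ≤ 2 * 2^(d*(n+1)) - 1 := by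
      have hmul : (2:ℝ)^(d*(n+1)) = 2^(d*n) * 2^d := by
        rw [← pow_add]; ring_nf
      rw [hCb, hmul]
      nlinarith
    calc Zz Q ν s (2^d*K) ≤ (1 + (2^d - 1) * Cb) * Zz Q ν s ((n+1)*K) := hcomb
      _ ≤ (2 * 2^(d*(n+1)) - 1) * Zz Q ν s ((n+1)*K) :=
          mul_le_mul_of_nonneg_right hnum hZ2

end MCaux
section Bridge

variable {S : Type} [Fintype S] [DecidableEq S]

lemma pReach_succ (μ : S → ℝ) (P : S → S → ℝ) (L : ℕ) (s : S) :
    pReach μ P (L+1) s = pReach (MCaux.ev P μ) P L s := by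
  rw [pReach, pReach,
    ← Equiv.sum_comp (Fin.consEquiv (fun _ : Fin (L + 1) => S)), Fintype.sum_prod_type,
    Finset.sum_comm]
  refine Finset.sum_congr rfl fun T' _ => ?_
  set g : ℕ → S := fun n => if h : n < L then T' ⟨n, h⟩ else s with hg
  have hbody : ∀ t : S,
      (fun f : ℕ → S => μ (f 0) * ∏ h ∈ Finset.range (L+1), P (f h) (f (h + 1)))
        (fun n => if h : n < L + 1 then (Fin.consEquiv (fun _ : Fin (L + 1) => S)) (t, T') ⟨n, h⟩ else s)
      = (μ t * P t (g 0)) * ∏ h ∈ Finset.range L, P (g h) (g (h + 1)) := by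
    intro t
    set f : ℕ → S := fun n => if h : n < L + 1
      then (Fin.consEquiv (fun _ : Fin (L + 1) => S)) (t, T') ⟨n, h⟩ else s with hf
    have hcons : ∀ n (h : n < L + 1),
        (Fin.consEquiv (fun _ : Fin (L + 1) => S)) (t, T') ⟨n, h⟩
          = Fin.cons (α := fun _ : Fin (L+1) => S) t T' ⟨n, h⟩ := fun n h => rfl
    have hf0 : f 0 = t := by
      rw [hf]
      simp only [dif_pos (Nat.succ_pos L), hcons]
      rw [show (⟨0, Nat.succ_pos L⟩ : Fin (L+1)) = 0 from rfl]
      exact Fin.cons_zero _ _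
    have hfg : ∀ n, f (n+1) = g n := by
      intro n
      by_cases h : n < L
      · rw [hf, hg]
        simp only [dif_pos (Nat.succ_lt_succ h), dif_pos h, hcons]
        rw [show (⟨n+1, Nat.succ_lt_succ h⟩ : Fin (L+1)) = Fin.succ ⟨n, h⟩ from rfl]
        exact Fin.cons_succ _ _ _
      · rw [hf, hg]
        simp only [dif_neg (show ¬ (n+1 < L+1) by omega), dif_neg h]
    have hprod : ∏ h ∈ Finset.range (L+1), P (f h) (f (h + 1))
        = (∏ h ∈ Finset.range L, P (f (h+1)) (f (h+2))) * P (f 0) (f 1) :=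
      Finset.prod_range_succ' (fun h => P (f h) (f (h+1))) L
    show μ (f 0) * ∏ h ∈ Finset.range (L+1), P (f h) (f (h + 1)) = _
    rw [hprod, hf0, hfg 0]
    have : ∏ h ∈ Finset.range L, P (f (h+1)) (f (h+2))
        = ∏ h ∈ Finset.range L, P (g h) (g (h+1)) :=
      Finset.prod_congr rfl fun h _ => by rw [hfg h, hfg (h+1)]
    rw [this]
    ring
  rw [Finset.sum_congr rfl fun t _ => hbody t, ← Finset.sum_mul]
  show (∑ t, μ t * P t (g 0)) * _ = MCaux.ev P μ (g 0) * _
  rfl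

lemma pReach_eq_pv (P : S → S → ℝ) (L : ℕ) : ∀ (μ : S → ℝ) (s : S),
    pReach μ P L s = MCaux.pv P μ L s := by
  induction L with
  | zero =>
    intro μ s
    rw [pReach]
    rw [Fintype.sum_unique]
    simp [MCaux.pv]
  | succ n ihL =>
    intro μ s
    rw [pReach_succ, ihL, MCaux.pv_succ]

end Bridge
theorem stmt3 {S : Type} [Fintype S]
    (μ : S → ℝ) (P : S → S → ℝ)
    (hμ0 : ∀ s, 0 ≤ μ s) (hμ1 : ∑ s, μ s = 1)
    (hP0 : ∀ s s', 0 ≤ P s s') (hP1 : ∀ s, ∑ s', P s s' = 1)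
    (s : S) (L : ℕ) (hL : Fintype.card S ≤ L) :
    ∑ h ∈ Finset.range (2 * L + 1), pReach μ P h s ≤
      4 * (Fintype.card S : ℝ) ^ (4 * Fintype.card S) *
        ∑ h ∈ Finset.range L, pReach μ P h s := by
  letI := Classical.decEq S
  have hQ1le : ∀ t, ∑ u, P t u ≤ 1 := fun t => le_of_eq (hP1 t)
  have hrw : ∀ N : ℕ, ∑ h ∈ Finset.range N, pReach μ P h s = MCaux.Zz P μ s N := by
    intro N
    exact Finset.sum_congr rfl fun h _ => pReach_eq_pv P h μ s
  rw [hrw, hrw]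
  set n := Fintype.card S with hn
  have hn1 : 1 ≤ n := by
    have : 0 < Fintype.card S := Fintype.card_pos_iff.2 ⟨s⟩
    omega
  have hZL0 : 0 ≤ MCaux.Zz P μ s L := MCaux.Zz_nonneg hP0 hμ0 L
  by_cases hn2 : n = 1
  · -- single state
    have hc1 : Fintype.card S = 1 := by omega
    obtain ⟨a, ha⟩ := Fintype.card_eq_one_iff.1 hc1
    haveI hU : Unique S := ⟨⟨s⟩, fun b => ((ha b).trans (ha s).symm)⟩
    have hds : (default : S) = s := (ha default).trans (ha s).symm
    have hPss : P s s = 1 := by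
      have h1 := hP1 s
      rw [Fintype.sum_unique] at h1
      rwa [hds] at h1
    have hph : ∀ h, MCaux.pv P μ h s = μ s := by
      intro h; induction h with
      | zero => rfl
      | succ m ihm =>
        rw [MCaux.pv_succ']
        show ∑ u, MCaux.pv P μ m u * P u s = μ s
        rw [Fintype.sum_unique, hds, ihm, hPss, mul_one]
    unfold MCaux.Zz
    rw [Finset.sum_congr rfl (fun h _ => hph h), Finset.sum_congr rfl (fun h _ => hph h),
      Finset.sum_const, Finset.sum_const, Finset.card_range, Finset.card_range,
      nsmul_eq_mul, nsmul_eq_mul, hn2]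
    have hL1 : (1:ℝ) ≤ (L:ℝ) := by exact_mod_cast (by omega : 1 ≤ L)
    have hμs : 0 ≤ μ s := hμ0 s
    push_cast
    nlinarith
  · -- at least two states
    have hn2' : 2 ≤ n := by omega
    set d := Nat.clog 2 (4*n) with hd
    have hdlow : 4*n ≤ 2^d := Nat.le_pow_clog (by norm_num) _
    have hd1 : 1 ≤ d := by
      by_contra hcon
      have hz : d = 0 := by omega
      rw [hz] at hdlow
      simp at hdlow
      omega
    have hdup : 2^d ≤ 8*n := by
      have h1 : 2^(d-1) < 4*n := Nat.pow_pred_clog_lt_self (by norm_num) (by omega)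
      have h2 : 2^d = 2 * 2^(d-1) := by
        rw [← pow_succ']
        congr 1
        omega
      omega
    have hfinal : (2*2^(d*n) - 1 : ℝ) ≤ 4 * (n:ℝ)^(4*n) := by
      have h3 : 8*n ≤ n^4 := by
        have h4 : 2^3 ≤ n^3 := Nat.pow_le_pow_left hn2' 3
        have h5 : 2^3 * n ≤ n^3 * n := Nat.mul_le_mul_right n h4
        have h6 : n^3 * n = n^4 := (pow_succ n 3).symm
        omega
      have h7 : (2:ℕ)^d ≤ n^4 := le_trans hdup h3
      have h8 : (2:ℕ)^(d*n) ≤ n^(4*n) := by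
        rw [pow_mul, pow_mul]
        exact Nat.pow_le_pow_left h7 n
      have h9 : ((2:ℝ))^(d*n) ≤ (n:ℝ)^(4*n) := by
        have := (Nat.cast_le (α := ℝ)).2 h8
        push_cast at this
        exact this
      have h10 : (0:ℝ) ≤ (n:ℝ)^(4*n) := by positivity
      linarith
    have hCb0 : (0:ℝ) ≤ 2*2^(d*n) - 1 := by
      have : (1:ℝ) ≤ 2^(d*n) := one_le_pow₀ (by norm_num)
      linarith
    have hmain : ∀ K : ℕ, 1 ≤ K → 2*L+1 ≤ 2^d*K → n*K ≤ L →
        MCaux.Zz P μ s (2*L+1) ≤ (2*2^(d*n) - 1 : ℝ) * MCaux.Zz P μ s L := by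
      intro K hK h2d hnK
      calc MCaux.Zz P μ s (2*L+1) ≤ MCaux.Zz P μ s (2^d*K) := MCaux.Zz_mono hP0 hμ0 h2d
        _ ≤ (2*2^(d*n) - 1 : ℝ) * MCaux.Zz P μ s (n*K) :=
            MCaux.key n S P μ s hn.symm hP0 hQ1le hμ0 K d hK hd1
        _ ≤ _ := mul_le_mul_of_nonneg_left (MCaux.Zz_mono hP0 hμ0 hnK) hCb0
    have hstep : MCaux.Zz P μ s (2*L+1) ≤ (2*2^(d*n) - 1 : ℝ) * MCaux.Zz P μ s L := by
      rcases le_or_gt (2*n - 1) L with hcase | hcase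
      · -- K = L / n
        have npos : 0 < n := by omega
        have hK1 : 1 ≤ L / n := (Nat.one_le_div_iff npos).2 hL
        have hdm : n * (L / n) + L % n = L := Nat.div_add_mod L n
        have hmod : L % n < n := Nat.mod_lt L npos
        have hnK : n*(L/n) ≤ L := by omega
        have hm1 : L - n + 1 ≤ n*(L/n) := by omega
        have h2d : 2*L+1 ≤ 2^d*(L/n) := by
          calc 2*L+1 ≤ 4*(L-n+1) := by omega
            _ ≤ 4*(n*(L/n)) := Nat.mul_le_mul_left 4 hm1
            _ = (4*n)*(L/n) := by ring
            _ ≤ 2^d*(L/n) := Nat.mul_le_mul_right _ hdlow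
        exact hmain (L/n) hK1 h2d hnK
      · -- K = 1
        have h2d : 2*L+1 ≤ 2^d*1 := by
          have : 2*L+1 ≤ 4*n := by omega
          omega
        exact hmain 1 le_rfl h2d (by omega)
    calc MCaux.Zz P μ s (2*L+1) ≤ (2*2^(d*n) - 1 : ℝ) * MCaux.Zz P μ s L := hstep
      _ ≤ 4 * (n:ℝ)^(4*n) * MCaux.Zz P μ s L := mul_le_mul_of_nonneg_right hfinal hZL0
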